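/- Let G be a cycle on state nodes 1,...,n (n ≥ 4) with two input nodes adjacent to non-adjacent state nodes k and l. Then with α = V_S \ {k, l}, the set N(α) \ α = {k, l}, and both k and l have exactly two neighbors in α (they are sharing nodes). Hence G is not strongly sign controllable. -/
import Mathlib


open scoped Classical

/-- Dedicated node of `α` in `G`: not in `α`, exactly one neighbor in `α`. -/
def ded {V : Type} (G : SimpleGraph V) (α : Finset V) (v : V) : Prop :=
  v ∉ α ∧ (α.filter (G.Adj v)).card = 1

/-- Cycle graph on state nodes `Fin n` with two input nodes adjacent to `k` and `l`. -/
def cycleTwoInput (n : ℕ) (k l : Fin n) : SimpleGraph (Fin n ⊕ Fin 2) :=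
  SimpleGraph.fromRel (fun x y =>
    match x, y with
    | Sum.inl i, Sum.inl j => (i : ℕ) + 1 = (j : ℕ) ∨ ((i : ℕ) = 0 ∧ (j : ℕ) = n - 1)
    | Sum.inr u, Sum.inl j => (u = 0 ∧ j = k) ∨ (u = 1 ∧ j = l)
    | _, _ => False)

lemma adj_ll (n : ℕ) (k l i j : Fin n) :
    (cycleTwoInput n k l).Adj (Sum.inl i) (Sum.inl j) ↔
      i ≠ j ∧ (((i:ℕ)+1 = j ∨ ((i:ℕ)=0 ∧ (j:ℕ)=n-1)) ∨ ((j:ℕ)+1 = i ∨ ((j:ℕ)=0 ∧ (i:ℕ)=n-1))) := by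
  simp [cycleTwoInput, SimpleGraph.fromRel_adj]

lemma adj_rl (n : ℕ) (k l j : Fin n) (u : Fin 2) :
    (cycleTwoInput n k l).Adj (Sum.inr u) (Sum.inl j) ↔ ((u = 0 ∧ j = k) ∨ (u = 1 ∧ j = l)) := by
  simp [cycleTwoInput, SimpleGraph.fromRel_adj]

lemma adj_rr (n : ℕ) (k l : Fin n) (u v : Fin 2) :
    ¬ (cycleTwoInput n k l).Adj (Sum.inr u) (Sum.inr v) := by
  simp [cycleTwoInput, SimpleGraph.fromRel_adj]

/-- key: neighbors of i among Fin n are exactly succ i and pred i -/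
lemma adj_ll' (n : ℕ) (hn : 4 ≤ n) (k l i j : Fin n) :
    (cycleTwoInput n k l).Adj (Sum.inl i) (Sum.inl j) ↔
      ((j:ℕ) = (if (i:ℕ) = n-1 then 0 else (i:ℕ)+1) ∨ (j:ℕ) = (if (i:ℕ) = 0 then n-1 else (i:ℕ)-1)) := by
  rw [adj_ll, Ne, Fin.ext_iff]
  have hi := i.isLt; have hj := j.isLt
  constructor
  · rintro ⟨h1, h2⟩; split_ifs <;> omega
  · intro h; split_ifs at h <;> constructor <;> omega

set_option maxHeartbeats 2000000 in
theorem stmt5 (n : ℕ) (hn : 4 ≤ n) (k l : Fin n) (hkl : k ≠ l)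
    (hnadj : ¬ (cycleTwoInput n k l).Adj (Sum.inl k) (Sum.inl l)) :
    -- with α = V_S \ {k, l}:
    ({v : Fin n ⊕ Fin 2 |
        v ∉ (((Finset.univ.erase k).erase l).image Sum.inl : Finset (Fin n ⊕ Fin 2)) ∧
        ∃ w ∈ (((Finset.univ.erase k).erase l).image Sum.inl : Finset (Fin n ⊕ Fin 2)),
          (cycleTwoInput n k l).Adj v w}
      = {Sum.inl k, Sum.inl l}) ∧
    (((((Finset.univ.erase k).erase l).image Sum.inl : Finset (Fin n ⊕ Fin 2)).filter
        ((cycleTwoInput n k l).Adj (Sum.inl k))).card = 2) ∧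
    (((((Finset.univ.erase k).erase l).image Sum.inl : Finset (Fin n ⊕ Fin 2)).filter
        ((cycleTwoInput n k l).Adj (Sum.inl l))).card = 2) ∧
    (¬ ∃ v, ded (cycleTwoInput n k l)
        (((Finset.univ.erase k).erase l).image Sum.inl : Finset (Fin n ⊕ Fin 2)) v) ∧
    -- hence G is not strongly sign controllable
    ¬ (∀ β : Finset (Fin n), β.Nonempty → k ∉ β → l ∉ β →
        ∃ v, ded (cycleTwoInput n k l) (β.image Sum.inl) v) := by
  have hn0 : 0 < n := by omega
  have hk := k.isLt; have hl := l.isLt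
  have hkl' : (k:ℕ) ≠ (l:ℕ) := fun h => hkl (Fin.ext h)
  set A : Finset (Fin n ⊕ Fin 2) :=
    (((Finset.univ.erase k).erase l).image Sum.inl) with hA
  have memA : ∀ j : Fin n, Sum.inl j ∈ A ↔ j ≠ l ∧ j ≠ k := by
    intro j
    simp [hA, Finset.mem_image, Finset.mem_erase]
  have memA' : ∀ u : Fin 2, Sum.inr u ∉ A := by
    intro u; simp [hA]
  -- succ/pred of k and l
  obtain ⟨a, hav⟩ : ∃ a : Fin n, (a:ℕ) = if (k:ℕ) = n-1 then 0 else (k:ℕ)+1 :=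
    ⟨⟨if (k:ℕ) = n-1 then 0 else (k:ℕ)+1, by split <;> omega⟩, rfl⟩
  obtain ⟨b, hbv⟩ : ∃ b : Fin n, (b:ℕ) = if (k:ℕ) = 0 then n-1 else (k:ℕ)-1 :=
    ⟨⟨if (k:ℕ) = 0 then n-1 else (k:ℕ)-1, by split <;> omega⟩, rfl⟩
  obtain ⟨c, hcv⟩ : ∃ c : Fin n, (c:ℕ) = if (l:ℕ) = n-1 then 0 else (l:ℕ)+1 :=
    ⟨⟨if (l:ℕ) = n-1 then 0 else (l:ℕ)+1, by split <;> omega⟩, rfl⟩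
  obtain ⟨d, hdv⟩ : ∃ d : Fin n, (d:ℕ) = if (l:ℕ) = 0 then n-1 else (l:ℕ)-1 :=
    ⟨⟨if (l:ℕ) = 0 then n-1 else (l:ℕ)-1, by split <;> omega⟩, rfl⟩
  have hlnot : ¬ ((l:ℕ) = (a:ℕ) ∨ (l:ℕ) = (b:ℕ)) := by
    rw [hav, hbv]; intro h; exact hnadj ((adj_ll' n hn k l k l).2 h)
  have hnadj' : ¬ (cycleTwoInput n k l).Adj (Sum.inl l) (Sum.inl k) :=
    fun h => hnadj h.symm
  have hknot : ¬ ((k:ℕ) = (c:ℕ) ∨ (k:ℕ) = (d:ℕ)) := by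
    rw [hcv, hdv]; intro h; exact hnadj' ((adj_ll' n hn k l l k).2 h)
  push_neg at hlnot hknot
  -- filter for k equals {inl a, inl b}
  have hfk : A.filter ((cycleTwoInput n k l).Adj (Sum.inl k)) = {Sum.inl a, Sum.inl b} := by
    ext w
    rcases w with j | u
    · simp only [Finset.mem_filter, memA, Finset.mem_insert, Finset.mem_singleton,
        Sum.inl.injEq, adj_ll' n hn k l k j, Fin.ext_iff]
      constructor
      · rintro ⟨⟨h1, h2⟩, h3⟩
        rcases h3 with h | h
        · left; rw [hav]; exact h
        · right; rw [hbv]; exact h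
      · intro h
        have hja : (j:ℕ) = (a:ℕ) ∨ (j:ℕ) = (b:ℕ) := h
        have hjl : (j:ℕ) ≠ (l:ℕ) := by
          rcases hja with h' | h' <;> omega
        have hjk : (j:ℕ) ≠ (k:ℕ) := by
          rw [hav, hbv] at hja; split_ifs at hja <;> omega
        exact ⟨⟨fun e => hjl (by rw [e]), fun e => hjk (by rw [e])⟩, by
          rcases hja with h' | h'
          · left; rw [← hav]; exact h'
          · right; rw [← hbv]; exact h'⟩
    · simp only [Finset.mem_filter, Finset.mem_insert, Finset.mem_singleton]
      constructor
      · rintro ⟨hmem, -⟩; exact absurd hmem (memA' u)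
      · rintro (h | h) <;> exact absurd h (by simp)
  have hfl : A.filter ((cycleTwoInput n k l).Adj (Sum.inl l)) = {Sum.inl c, Sum.inl d} := by
    ext w
    rcases w with j | u
    · simp only [Finset.mem_filter, memA, Finset.mem_insert, Finset.mem_singleton,
        Sum.inl.injEq, adj_ll' n hn k l l j, Fin.ext_iff]
      constructor
      · rintro ⟨⟨h1, h2⟩, h3⟩
        rcases h3 with h | h
        · left; rw [hcv]; exact h
        · right; rw [hdv]; exact h
      · intro h
        have hja : (j:ℕ) = (c:ℕ) ∨ (j:ℕ) = (d:ℕ) := h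
        have hjk : (j:ℕ) ≠ (k:ℕ) := by
          rcases hja with h' | h' <;> omega
        have hjl : (j:ℕ) ≠ (l:ℕ) := by
          rw [hcv, hdv] at hja; split_ifs at hja <;> omega
        exact ⟨⟨fun e => hjl (by rw [e]), fun e => hjk (by rw [e])⟩, by
          rcases hja with h' | h'
          · left; rw [← hcv]; exact h'
          · right; rw [← hdv]; exact h'⟩
    · simp only [Finset.mem_filter, Finset.mem_insert, Finset.mem_singleton]
      constructor
      · rintro ⟨hmem, -⟩; exact absurd hmem (memA' u)
      · rintro (h | h) <;> exact absurd h (by simp)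
  have hab : (a:ℕ) ≠ (b:ℕ) := by rw [hav, hbv]; split_ifs <;> omega
  have hcd : (c:ℕ) ≠ (d:ℕ) := by rw [hcv, hdv]; split_ifs <;> omega
  have card_k : (A.filter ((cycleTwoInput n k l).Adj (Sum.inl k))).card = 2 := by
    rw [hfk]; rw [Finset.card_insert_of_notMem (by simp [Fin.ext_iff, hab]),
      Finset.card_singleton]
  have card_l : (A.filter ((cycleTwoInput n k l).Adj (Sum.inl l))).card = 2 := by
    rw [hfl]; rw [Finset.card_insert_of_notMem (by simp [Fin.ext_iff, hcd]),
      Finset.card_singleton]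
  -- part 1
  have part1 : ({v : Fin n ⊕ Fin 2 |
      v ∉ A ∧ ∃ w ∈ A, (cycleTwoInput n k l).Adj v w}
      = {Sum.inl k, Sum.inl l}) := by
    ext v
    simp only [Set.mem_setOf_eq, Set.mem_insert_iff, Set.mem_singleton_iff]
    rcases v with i | u
    · constructor
      · rintro ⟨hni, -⟩
        rw [memA] at hni
        simp only [Sum.inl.injEq]
        by_contra hc'
        push_neg at hc'
        exact hni ⟨fun e => hc'.2 (by rw [e]), fun e => hc'.1 (by rw [e])⟩
      · rintro (h | h) <;> rw [h]
        · refine ⟨by rw [memA]; rintro ⟨-, h⟩; exact h rfl, Sum.inl a, ?_, ?_⟩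
          · rw [memA]
            have hak : (a:ℕ) ≠ (k:ℕ) := by rw [hav]; split_ifs <;> omega
            exact ⟨fun e => hlnot.1 (by rw [e]), fun e => hak (by rw [e])⟩
          · exact (adj_ll' n hn k l k a).2 (Or.inl (by rw [hav]))
        · refine ⟨by rw [memA]; rintro ⟨h, -⟩; exact h rfl, Sum.inl c, ?_, ?_⟩
          · rw [memA]
            have hcl : (c:ℕ) ≠ (l:ℕ) := by rw [hcv]; split_ifs <;> omega
            exact ⟨fun e => hcl (by rw [e]), fun e => hknot.1 (by rw [e])⟩
          · exact (adj_ll' n hn k l l c).2 (Or.inl (by rw [hcv]))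
    · constructor
      · rintro ⟨-, w, hw, hadj⟩
        rcases w with j | u'
        · rw [adj_rl] at hadj
          rw [memA] at hw
          rcases hadj with ⟨-, h⟩ | ⟨-, h⟩
          · exact absurd h hw.2
          · exact absurd h hw.1
        · exact absurd hadj (adj_rr n k l u u')
      · rintro (h | h) <;> exact absurd h (by simp)
  have part4 : ¬ ∃ v, ded (cycleTwoInput n k l) A v := by
    rintro ⟨v, hv, hcard⟩
    rcases v with i | u
    · rw [memA] at hv
      have : i = l ∨ i = k := by
        by_contra hc'; push_neg at hc'; exact hv ⟨hc'.1, hc'.2⟩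
      rcases this with rfl | rfl
      · rw [card_l] at hcard; omega
      · rw [card_k] at hcard; omega
    · have hemp : A.filter ((cycleTwoInput n k l).Adj (Sum.inr u)) = ∅ := by
        rw [Finset.eq_empty_iff_forall_notMem]
        intro w hw
        rw [Finset.mem_filter] at hw
        rcases w with j | u'
        · rw [adj_rl] at hw
          rw [memA] at hw
          rcases hw.2 with ⟨-, h⟩ | ⟨-, h⟩
          · exact hw.1.2 h
          · exact hw.1.1 h
        · exact adj_rr n k l u u' hw.2
      rw [hemp] at hcard; simp at hcard
  refine ⟨part1, card_k, card_l, part4, ?_⟩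
  intro H
  have hlm : l ∈ Finset.univ.erase k := by
    rw [Finset.mem_erase]; exact ⟨Ne.symm hkl, Finset.mem_univ l⟩
  have hcardβ : ((Finset.univ.erase k).erase l).card = n - 2 := by
    rw [Finset.card_erase_of_mem hlm, Finset.card_erase_of_mem (Finset.mem_univ k),
      Finset.card_univ, Fintype.card_fin]
    omega
  have hne : ((Finset.univ.erase k).erase l).Nonempty := by
    rw [← Finset.card_pos, hcardβ]; omega
  exact part4 (H _ hne (by simp [hkl]) (by simp))
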